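/- Let P(λ) = M − λE with M generic and E a partial permutation 0/1 matrix, and suppose the bipartite graph B(P(λ)) is DM-irreducible. If B(P(λ)) contains a self-loop (a position (i,i)-type entry of the form t_l − λ), then det P(λ) has at least one nonzero root in λ for generic values of the indeterminates. -/

import Mathlib

/-- `M` is a matching inside the edge set `Ed` of a bipartite graph on `Fin n × Fin n`. -/
def IsMatchingIn (n : ℕ) (Ed M : Finset (Fin n × Fin n)) : Prop :=
  M ⊆ Ed ∧ ∀ e ∈ M, ∀ e' ∈ M, e ≠ e' → e.1 ≠ e'.1 ∧ e.2 ≠ e'.2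

/-- The maximum matching number of the bipartite graph with edge set `Ed`. -/
noncomputable def mtNum (n : ℕ) (Ed : Finset (Fin n × Fin n)) : ℕ :=
  sSup {k : ℕ | ∃ M, IsMatchingIn n Ed M ∧ M.card = k}

/-- Edge set of the bipartite graph of `P(λ) = M - λE`. -/
def pencilEdges (n r : ℕ) (pos : Fin r → Fin n × Fin n) (EE : Finset (Fin n × Fin n)) :
    Finset (Fin n × Fin n) :=
  EE ∪ Finset.univ.image pos

/-- Determinant of the generic matrix pencil `P(λ) = M - λE`. -/
noncomputable def pencilDet (n r : ℕ) (pos : Fin r → Fin n × Fin n)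
    (EE : Finset (Fin n × Fin n)) : Polynomial (MvPolynomial (Fin r) ℂ) :=
  (Matrix.of fun i j =>
    Polynomial.C (∑ k ∈ Finset.univ.filter (fun k => pos k = (i, j)),
        (MvPolynomial.X k : MvPolynomial (Fin r) ℂ))
    - (if (i, j) ∈ EE then (Polynomial.X : Polynomial (MvPolynomial (Fin r) ℂ)) else 0)).det

/-- A complex polynomial with two nonzero coefficients has a nonzero root. -/
theorem exists_ne_zero_root (a : ℕ) : ∀ (b : ℕ) (p : Polynomial ℂ), a < b →
    p.coeff a ≠ 0 → p.coeff b ≠ 0 → ∃ z : ℂ, z ≠ 0 ∧ p.eval z = 0 := by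
  induction a with
  | zero =>
    intro b p hab ha hb
    have hdeg : 0 < p.degree := lt_of_lt_of_le (by exact_mod_cast hab)
      (Polynomial.le_degree_of_ne_zero hb)
    obtain ⟨z, hz⟩ := Complex.exists_root hdeg
    refine ⟨z, ?_, hz⟩
    rintro rfl
    rw [Polynomial.IsRoot, ← Polynomial.coeff_zero_eq_eval_zero] at hz
    exact ha hz
  | succ a ih =>
    intro b p hab ha hb
    by_cases h0 : p.coeff 0 = 0
    · obtain ⟨q, rfl⟩ := Polynomial.X_dvd_iff.mpr h0
      obtain ⟨b', rfl⟩ : ∃ b', b = b' + 1 := ⟨b - 1, by omega⟩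
      rw [Polynomial.coeff_X_mul] at ha hb
      obtain ⟨z, hz, hz'⟩ := ih b' q (by omega) ha hb
      exact ⟨z, hz, by simp [hz']⟩
    · have hdeg : 0 < p.degree := lt_of_lt_of_le (by exact_mod_cast (show 0 < b by omega))
        (Polynomial.le_degree_of_ne_zero hb)
      obtain ⟨z, hz⟩ := Complex.exists_root hdeg
      refine ⟨z, ?_, hz⟩
      rintro rfl
      rw [Polynomial.IsRoot, ← Polynomial.coeff_zero_eq_eval_zero] at hz
      exact h0 hz


theorem matching_card_le {n : ℕ} {Ed M : Finset (Fin n × Fin n)}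
    (h : IsMatchingIn n Ed M) : M.card ≤ n := by
  have hinj : Set.InjOn Prod.fst (M : Set (Fin n × Fin n)) := by
    intro e he e' he' hee
    by_contra hne
    exact (h.2 e he e' he' hne).1 hee
  calc M.card = (M.image Prod.fst).card := (Finset.card_image_of_injOn hinj).symm
    _ ≤ (Finset.univ : Finset (Fin n)).card := Finset.card_le_card (Finset.subset_univ _)
    _ = n := by simp

theorem mtNum_bddAbove {n : ℕ} (Ed : Finset (Fin n × Fin n)) :
    BddAbove {k : ℕ | ∃ M, IsMatchingIn n Ed M ∧ M.card = k} := by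
  refine ⟨n, fun k hk => ?_⟩
  obtain ⟨M, hM, rfl⟩ := hk
  exact matching_card_le hM

theorem le_mtNum {n : ℕ} {Ed M : Finset (Fin n × Fin n)} (h : IsMatchingIn n Ed M) :
    M.card ≤ mtNum n Ed :=
  le_csSup (mtNum_bddAbove Ed) ⟨M, h, rfl⟩

theorem mtNum_spec {n : ℕ} (Ed : Finset (Fin n × Fin n)) :
    ∃ M, IsMatchingIn n Ed M ∧ M.card = mtNum n Ed := by
  have hne : {k : ℕ | ∃ M, IsMatchingIn n Ed M ∧ M.card = k}.Nonempty := by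
    refine ⟨0, ∅, ⟨Finset.empty_subset _, by simp⟩, by simp⟩
  exact Nat.sSup_mem hne (mtNum_bddAbove Ed)

open MvPolynomial in
theorem prod_X_monomial {ι σ' : Type*} (T : Finset ι) (w : ι → σ') :
    ∏ j ∈ T, (MvPolynomial.X (w j) : MvPolynomial σ' ℂ)
      = MvPolynomial.monomial (∑ j ∈ T, Finsupp.single (w j) 1) (1 : ℂ) := by
  classical
  induction T using Finset.induction_on with
  | empty => simp
  | insert _ _ h ih =>
    rw [Finset.prod_insert h, ih, Finset.sum_insert h]
    rw [MvPolynomial.X, MvPolynomial.monomial_mul, one_mul]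

open Polynomial MvPolynomial in
theorem coeff_pencilDet_ne_zero (n r : ℕ) (pos : Fin r → Fin n × Fin n)
    (hpos : Function.Injective pos) (EE : Finset (Fin n × Fin n))
    (hE : ∀ e ∈ EE, ∀ e' ∈ EE, e ≠ e' → e.1 ≠ e'.1 ∧ e.2 ≠ e'.2)
    (kdef : Fin r) (ρ : Equiv.Perm (Fin n)) (G : Finset (Fin n)) (κ : Fin n → Fin r)
    (hκ : ∀ j ∈ G, pos (κ j) = (ρ j, j)) (hGE : ∀ j ∉ G, (ρ j, j) ∈ EE) :
    (pencilDet n r pos EE).coeff Gᶜ.card ≠ 0 := by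
  classical
  set R := MvPolynomial (Fin r) ℂ
  set d := Gᶜ.card with hd
  set s : Fin n → Fin n → R := fun i j =>
    ∑ k ∈ Finset.univ.filter (fun k => pos k = (i, j)), MvPolynomial.X k with hs
  set m₀ : Fin r →₀ ℕ := ∑ j ∈ G, Finsupp.single (κ j) 1 with hm₀
  have hm₀app : ∀ j ∈ G, m₀ (κ j) ≠ 0 := by
    intro j hj
    rw [hm₀, Finsupp.finset_sum_apply]
    intro hz
    have := Finset.sum_eq_zero_iff.mp hz j hj
    simp [Finsupp.single_eq_same] at this
  suffices h : MvPolynomial.coeff m₀ ((pencilDet n r pos EE).coeff d) ≠ 0 by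
    intro hc; rw [hc] at h; simp at h
  rw [pencilDet, Matrix.det_apply]
  rw [Polynomial.finset_sum_coeff]
  have key : ∀ τ : Equiv.Perm (Fin n),
      MvPolynomial.coeff m₀ ((Equiv.Perm.sign τ •
        ∏ j, (Matrix.of fun i j => Polynomial.C (s i j) -
          (if (i, j) ∈ EE then (Polynomial.X : Polynomial R) else 0)) (τ j) j).coeff d)
      = if τ = ρ then ((Equiv.Perm.sign ρ : ℤ) : ℂ) * (-1 : ℂ)^d else 0 := by
    intro τ
    rw [Polynomial.coeff_smul, MvPolynomial.coeff_smul]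
    simp only [Matrix.of_apply]
    have hexp : (∏ j, (Polynomial.C (s (τ j) j) -
        (if (τ j, j) ∈ EE then (Polynomial.X : Polynomial R) else 0)))
        = ∑ T ∈ (Finset.univ : Finset (Fin n)).powerset,
            (∏ j ∈ T, Polynomial.C (s (τ j) j)) *
            ∏ j ∈ Finset.univ \ T, (-(if (τ j, j) ∈ EE then (Polynomial.X : Polynomial R) else 0)) := by
      simp only [sub_eq_add_neg]
      exact Finset.prod_add _ _ _
    rw [hexp, Polynomial.finset_sum_coeff, MvPolynomial.coeff_sum]
    have claim : ∀ T ∈ (Finset.univ : Finset (Fin n)).powerset,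
        MvPolynomial.coeff m₀ (((∏ j ∈ T, Polynomial.C (s (τ j) j)) *
            ∏ j ∈ Finset.univ \ T, (-(if (τ j, j) ∈ EE then (Polynomial.X : Polynomial R) else 0))).coeff d)
        = if τ = ρ ∧ T = G then (-1:ℂ)^d else 0 := by
      intro T _
      by_cases hb : ∀ j ∈ Finset.univ \ T, (τ j, j) ∈ EE
      · have hB : (∏ j ∈ Finset.univ \ T, (-(if (τ j, j) ∈ EE then (Polynomial.X : Polynomial R) else 0)))
            = Polynomial.C ((-1 : R)^((Finset.univ \ T).card)) * Polynomial.X ^ ((Finset.univ \ T).card) := by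
          have h1 : (∏ j ∈ Finset.univ \ T, (-(if (τ j, j) ∈ EE then (Polynomial.X : Polynomial R) else 0)))
              = ∏ j ∈ Finset.univ \ T, ((-1 : Polynomial R) * Polynomial.X) := by
            refine Finset.prod_congr rfl (fun j hj => ?_)
            rw [if_pos (hb j hj)]; ring
          rw [h1, Finset.prod_mul_distrib, Finset.prod_const, Finset.prod_const, map_pow,
            map_neg, Polynomial.C_1]
        rw [hB]
        by_cases hrange : ∀ j ∈ T, ∃ k, pos k = (τ j, j)
        · set w : Fin n → Fin r := fun j =>
            if h : ∃ k, pos k = (τ j, j) then h.choose else kdef with hw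
          have hwspec : ∀ j ∈ T, pos (w j) = (τ j, j) := by
            intro j hj
            rw [hw]; dsimp only
            rw [dif_pos (hrange j hj)]
            exact (hrange j hj).choose_spec
          have hsX : ∀ j ∈ T, s (τ j) j = MvPolynomial.X (w j) := by
            intro j hj
            have hfil : Finset.univ.filter (fun k => pos k = (τ j, j)) = {w j} := by
              ext k
              simp only [Finset.mem_filter, Finset.mem_univ, true_and, Finset.mem_singleton]
              constructor
              · intro hk; exact hpos (hk.trans (hwspec j hj).symm)
              · rintro rfl; exact hwspec j hj
            rw [hs]; dsimp only; rw [hfil, Finset.sum_singleton]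
          have hA : (∏ j ∈ T, Polynomial.C (s (τ j) j))
              = Polynomial.C (MvPolynomial.monomial (∑ j ∈ T, Finsupp.single (w j) 1) (1:ℂ)) := by
            rw [← map_prod]
            congr 1
            rw [Finset.prod_congr rfl hsX]
            exact prod_X_monomial T w
          rw [hA, ← mul_assoc, ← map_mul, Polynomial.coeff_C_mul, Polynomial.coeff_X_pow]
          by_cases hcard : (Finset.univ \ T).card = d
          · rw [hcard, if_pos rfl, mul_one]
            rw [show ((-1 : R))^d = MvPolynomial.C ((-1:ℂ)^d) from by
              rw [map_pow, map_neg, map_one]]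
            rw [mul_comm, MvPolynomial.C_mul_monomial, mul_one, MvPolynomial.coeff_monomial]
            have hiff : (∑ j ∈ T, Finsupp.single (w j) 1) = m₀ ↔ (τ = ρ ∧ T = G) := by
              constructor
              · intro hmeq
                have hGT : ∀ j ∈ G, j ∈ T ∧ τ j = ρ j := by
                  intro j hj
                  have h1 : (∑ j' ∈ T, Finsupp.single (w j') 1) (κ j) ≠ 0 := by
                    rw [hmeq]; exact hm₀app j hj
                  rw [Finsupp.finset_sum_apply] at h1
                  obtain ⟨j', hj'T, hj'⟩ := Finset.exists_ne_zero_of_sum_ne_zero h1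
                  have hwj' : w j' = κ j := by
                    by_contra hcon
                    rw [Finsupp.single_apply, if_neg hcon] at hj'
                    exact hj' rfl
                  have hpr : (τ j', j') = (ρ j, j) := by
                    rw [← hwspec j' hj'T, hwj', hκ j hj]
                  obtain ⟨hp1, hp2⟩ := Prod.ext_iff.mp hpr
                  cases hp2
                  exact ⟨hj'T, hp1⟩
                have hsub : G ⊆ T := fun j hj => (hGT j hj).1
                have hcards : T.card = G.card := by
                  have e1 : (Finset.univ \ T).card = n - T.card := by
                    rw [Finset.card_sdiff_of_subset (Finset.subset_univ _)]
                    simp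
                  have e2 : Gᶜ.card = n - G.card := by
                    rw [Finset.card_compl]
                    simp
                  have e3 : T.card ≤ n := by
                    simpa using Finset.card_le_card (Finset.subset_univ T)
                  have e4 : G.card ≤ n := by
                    simpa using Finset.card_le_card (Finset.subset_univ G)
                  omega
                have hTG : T = G := (Finset.eq_of_subset_of_card_le hsub hcards.le).symm
                refine ⟨?_, hTG⟩
                refine Equiv.ext fun j => ?_
                by_cases hj : j ∈ G
                · exact (hGT j hj).2
                · have hjT : j ∉ T := hTG ▸ hj
                  have h1 : (τ j, j) ∈ EE := hb j (by simp [hjT])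
                  have h2 : (ρ j, j) ∈ EE := hGE j hj
                  by_contra hne
                  have : (τ j, j) ≠ (ρ j, j) := by
                    intro hcon; exact hne (Prod.ext_iff.mp hcon).1
                  exact (hE _ h1 _ h2 this).2 rfl
              · rintro ⟨rfl, rfl⟩
                rw [hm₀]
                refine Finset.sum_congr rfl (fun j hj => ?_)
                have : w j = κ j := hpos ((hwspec j hj).trans (hκ j hj).symm)
                rw [this]
            rw [if_congr hiff rfl rfl]
          · rw [if_neg (fun h => hcard h.symm), mul_zero, MvPolynomial.coeff_zero]
            rw [if_neg]
            rintro ⟨rfl, rfl⟩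
            exact hcard (by rw [← Finset.compl_eq_univ_sdiff])
        · push_neg at hrange
          obtain ⟨j, hjT, hjr⟩ := hrange
          have hz : (∏ j ∈ T, Polynomial.C (s (τ j) j)) = 0 := by
            refine Finset.prod_eq_zero hjT ?_
            have : Finset.univ.filter (fun k => pos k = (τ j, j)) = ∅ := by
              ext k; simp only [Finset.mem_filter, Finset.mem_univ, true_and,
                Finset.notMem_empty, iff_false]
              exact fun hk => hjr k hk
            rw [hs]; dsimp only; rw [this, Finset.sum_empty, map_zero]
          rw [hz, zero_mul, Polynomial.coeff_zero, MvPolynomial.coeff_zero]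
          rw [if_neg]
          rintro ⟨rfl, rfl⟩
          exact hjr (κ j) (hκ j hjT)
      · push_neg at hb
        obtain ⟨j, hjT, hjE⟩ := hb
        have hz : (∏ j ∈ Finset.univ \ T, (-(if (τ j, j) ∈ EE then (Polynomial.X : Polynomial R) else 0))) = 0 := by
          refine Finset.prod_eq_zero hjT ?_
          rw [if_neg hjE, neg_zero]
        rw [hz, mul_zero, Polynomial.coeff_zero, MvPolynomial.coeff_zero]
        rw [if_neg]
        rintro ⟨rfl, rfl⟩
        exact hjE (hGE j (by simpa using (Finset.mem_sdiff.mp hjT).2))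
    rw [Finset.sum_congr rfl claim]
    by_cases hτ : τ = ρ
    · subst hτ
      simp only [true_and]
      rw [Finset.sum_ite_eq' _ G (fun _ => (-1:ℂ)^d)]
      rw [if_pos (Finset.mem_powerset.mpr (Finset.subset_univ G))]
      simp [Units.smul_def, zsmul_eq_mul]
    · simp [hτ]
  simp only [hs] at key
  rw [MvPolynomial.coeff_sum]
  rw [Finset.sum_congr rfl (fun τ _ => key τ)]
  rw [Finset.sum_ite_eq' _ ρ (fun _ => ((Equiv.Perm.sign ρ : ℤ) : ℂ) * (-1 : ℂ)^d)]
  rw [if_pos (Finset.mem_univ ρ)]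
  refine mul_ne_zero ?_ (pow_ne_zero _ (neg_ne_zero.mpr one_ne_zero))
  rw [Int.cast_ne_zero]
  exact Units.ne_zero _

theorem matching_perm {n : ℕ} {M : Finset (Fin n × Fin n)}
    (hM : ∀ e ∈ M, ∀ e' ∈ M, e ≠ e' → e.1 ≠ e'.1 ∧ e.2 ≠ e'.2) (hcard : M.card = n) :
    ∃ ρ : Equiv.Perm (Fin n), ∀ j, (ρ j, j) ∈ M := by
  classical
  have hinj2 : Set.InjOn Prod.snd (M : Set (Fin n × Fin n)) := by
    intro a ha b hb hab
    by_contra hne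
    exact (hM a ha b hb hne).2 hab
  have himg : M.image Prod.snd = Finset.univ := by
    apply Finset.eq_univ_of_card
    rw [Finset.card_image_of_injOn hinj2, hcard]
    simp
  have hex : ∀ j, ∃ i, (i, j) ∈ M := by
    intro j
    have : j ∈ M.image Prod.snd := himg ▸ Finset.mem_univ j
    obtain ⟨⟨i, j'⟩, hp, rfl⟩ := Finset.mem_image.mp this
    exact ⟨i, hp⟩
  choose f hf using hex
  have hfinj : Function.Injective f := by
    intro j j' h
    by_contra hne
    have hpairs : ((f j : Fin n), j) ≠ (f j', j') := fun hc => hne (Prod.ext_iff.mp hc).2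
    exact (hM _ (hf j) _ (hf j') hpairs).1 h
  exact ⟨Equiv.ofBijective f (Finite.injective_iff_bijective.mp hfinj), fun j => hf j⟩


/-- If the bipartite graph of the pencil `P(λ) = M - λE` is DM-irreducible (deleting any row
vertex and any column vertex decreases the maximum matching number by exactly one) and it
contains a self-loop (an entry `t_l - λ`), then `det P(λ)` has at least one nonzero root in
`λ` for generic values of the indeterminates. -/
theorem stmt11 (n r : ℕ) (pos : Fin r → Fin n × Fin n) (hpos : Function.Injective pos)
    (EE : Finset (Fin n × Fin n))
    (hE : ∀ e ∈ EE, ∀ e' ∈ EE, e ≠ e' → e.1 ≠ e'.1 ∧ e.2 ≠ e'.2)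
    (hDM : ∀ v₁ v₂ : Fin n,
      mtNum n ((pencilEdges n r pos EE).filter (fun e => e.1 ≠ v₁ ∧ e.2 ≠ v₂)) + 1
        = mtNum n (pencilEdges n r pos EE))
    (hself : ∃ k, pos k ∈ EE) :
    ∃ c : MvPolynomial (Fin r) ℂ, c ≠ 0 ∧
      ∀ t : Fin r → ℂ, MvPolynomial.eval t c ≠ 0 →
        ∃ z : ℂ, z ≠ 0 ∧
          Polynomial.eval z ((pencilDet n r pos EE).map (MvPolynomial.eval t)) = 0 := by
  classical
  obtain ⟨k₀, hk₀⟩ := hself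
  set e := pos k₀ with he
  set Ed := pencilEdges n r pos EE with hEd
  have hn1 : 1 ≤ n := Fin.pos e.1
  -- Step 1: mtNum Ed = n
  have hν : mtNum n Ed = n := by
    by_contra hne
    obtain ⟨M, hM, hMcard⟩ := mtNum_spec Ed
    have hlt : mtNum n Ed < n :=
      lt_of_le_of_ne (by rw [← hMcard]; exact matching_card_le hM) hne
    have hrow : ∃ v₁ : Fin n, v₁ ∉ M.image Prod.fst := by
      by_contra h
      push_neg at h
      have h2 : M.image Prod.fst = Finset.univ := Finset.eq_univ_iff_forall.mpr h
      have h3 := Finset.card_image_le (s := M) (f := Prod.fst)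
      rw [h2, hMcard] at h3
      simp at h3
      omega
    have hcol : ∃ v₂ : Fin n, v₂ ∉ M.image Prod.snd := by
      by_contra h
      push_neg at h
      have h2 : M.image Prod.snd = Finset.univ := Finset.eq_univ_iff_forall.mpr h
      have h3 := Finset.card_image_le (s := M) (f := Prod.snd)
      rw [h2, hMcard] at h3
      simp at h3
      omega
    obtain ⟨v₁, hv₁⟩ := hrow
    obtain ⟨v₂, hv₂⟩ := hcol
    have hMfilt : IsMatchingIn n (Ed.filter (fun x => x.1 ≠ v₁ ∧ x.2 ≠ v₂)) M := by
      refine ⟨fun x hx => Finset.mem_filter.mpr ⟨hM.1 hx, ?_, ?_⟩, hM.2⟩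
      · intro hc; exact hv₁ (Finset.mem_image.mpr ⟨x, hx, hc⟩)
      · intro hc; exact hv₂ (Finset.mem_image.mpr ⟨x, hx, hc⟩)
    have := le_mtNum hMfilt
    have hDM' := hDM v₁ v₂
    omega
  -- Step 2: perfect matching containing e
  obtain ⟨M', hM', hM'card⟩ := mtNum_spec (Ed.filter (fun x => x.1 ≠ e.1 ∧ x.2 ≠ e.2))
  have hM'n : M'.card = n - 1 := by
    have := hDM e.1 e.2
    rw [hν] at this
    omega
  have hMem' : ∀ x ∈ M', x ∈ Ed ∧ x.1 ≠ e.1 ∧ x.2 ≠ e.2 := by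
    intro x hx
    have := hM'.1 hx
    simpa using Finset.mem_filter.mp this
  have heM' : e ∉ M' := fun hc => (hMem' e hc).2.1 rfl
  have heEd : e ∈ Ed := Finset.mem_union_left _ hk₀
  set M := insert e M' with hMdef
  have hMmatch : ∀ a ∈ M, ∀ b ∈ M, a ≠ b → a.1 ≠ b.1 ∧ a.2 ≠ b.2 := by
    intro a ha b hb hab
    rcases Finset.mem_insert.mp ha with rfl | ha' <;>
      rcases Finset.mem_insert.mp hb with rfl | hb'
    · exact absurd rfl hab
    · exact ⟨fun hc => (hMem' b hb').2.1 hc.symm, fun hc => (hMem' b hb').2.2 hc.symm⟩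
    · exact ⟨(hMem' a ha').2.1, (hMem' a ha').2.2⟩
    · exact hM'.2 a ha' b hb' hab
  have hMcard : M.card = n := by
    rw [hMdef, Finset.card_insert_of_notMem heM', hM'n]
    omega
  have hMsub : M ⊆ Ed := by
    rw [hMdef]
    exact Finset.insert_subset heEd (fun x hx => (hMem' x hx).1)
  -- Step 3: the permutation
  obtain ⟨ρ, hρ⟩ := matching_perm hMmatch hMcard
  have hρe : ρ e.2 = e.1 := by
    have h1 : ((ρ e.2 : Fin n), e.2) ∈ M := hρ e.2
    have h2 : e ∈ M := Finset.mem_insert_self e M'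
    by_contra hne
    have hpair : ((ρ e.2 : Fin n), e.2) ≠ e := by
      intro hc
      exact hne (Prod.ext_iff.mp hc).1
    exact (hMmatch _ h1 _ h2 hpair).2 rfl
  -- Step 4: the sets G_a ⊃ G_b and κ
  set Ga : Finset (Fin n) := Finset.univ.filter (fun j => ∃ k, pos k = (ρ j, j)) with hGa
  set κ : Fin n → Fin r := fun j =>
    if h : ∃ k, pos k = (ρ j, j) then h.choose else k₀ with hκdef
  have hκ : ∀ j ∈ Ga, pos (κ j) = (ρ j, j) := by
    intro j hj
    have h := (Finset.mem_filter.mp hj).2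
    rw [hκdef]; dsimp only
    rw [dif_pos h]
    exact h.choose_spec
  have hGEa : ∀ j ∉ Ga, (ρ j, j) ∈ EE := by
    intro j hj
    have hmem : ((ρ j : Fin n), j) ∈ Ed := hMsub (hρ j)
    rcases Finset.mem_union.mp hmem with h | h
    · exact h
    · exfalso
      obtain ⟨k, _, hk⟩ := Finset.mem_image.mp h
      exact hj (Finset.mem_filter.mpr ⟨Finset.mem_univ j, ⟨k, hk⟩⟩)
  have he2Ga : e.2 ∈ Ga := by
    refine Finset.mem_filter.mpr ⟨Finset.mem_univ _, ⟨k₀, ?_⟩⟩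
    rw [hρe, ← he]
  set Gb : Finset (Fin n) := Ga.erase e.2 with hGb
  have hGEb : ∀ j ∉ Gb, (ρ j, j) ∈ EE := by
    intro j hj
    by_cases hje : j = e.2
    · subst hje
      rw [hρe]
      simpa using hk₀
    · exact hGEa j (fun hc => hj (Finset.mem_erase.mpr ⟨hje, hc⟩))
  have hκb : ∀ j ∈ Gb, pos (κ j) = (ρ j, j) := fun j hj => hκ j (Finset.mem_erase.mp hj).2
  -- degrees
  have hdlt : Gaᶜ.card < Gbᶜ.card := by
    have h1 : Gb.card = Ga.card - 1 := Finset.card_erase_of_mem he2Ga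
    have h2 : 1 ≤ Ga.card := Finset.card_pos.mpr ⟨e.2, he2Ga⟩
    have h3 : Ga.card ≤ n := by simpa using Finset.card_le_card (Finset.subset_univ Ga)
    have e1 : Gaᶜ.card = n - Ga.card := by rw [Finset.card_compl]; simp
    have e2 : Gbᶜ.card = n - Gb.card := by rw [Finset.card_compl]; simp
    omega
  -- nonzero coefficients
  have hca := coeff_pencilDet_ne_zero n r pos hpos EE hE k₀ ρ Ga κ hκ hGEa
  have hcb := coeff_pencilDet_ne_zero n r pos hpos EE hE k₀ ρ Gb κ hκb hGEb
  refine ⟨(pencilDet n r pos EE).coeff Gaᶜ.card * (pencilDet n r pos EE).coeff Gbᶜ.card,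
    mul_ne_zero hca hcb, ?_⟩
  intro t ht
  rw [map_mul] at ht
  have ht1 : MvPolynomial.eval t ((pencilDet n r pos EE).coeff Gaᶜ.card) ≠ 0 :=
    fun hc => ht (by rw [hc, zero_mul])
  have ht2 : MvPolynomial.eval t ((pencilDet n r pos EE).coeff Gbᶜ.card) ≠ 0 :=
    fun hc => ht (by rw [hc, mul_zero])
  have hc1 : ((pencilDet n r pos EE).map (MvPolynomial.eval t)).coeff Gaᶜ.card ≠ 0 := by
    rwa [Polynomial.coeff_map]
  have hc2 : ((pencilDet n r pos EE).map (MvPolynomial.eval t)).coeff Gbᶜ.card ≠ 0 := by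
    rwa [Polynomial.coeff_map]
  exact exists_ne_zero_root _ _ _ hdlt hc1 hc2
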